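/- arXiv:2605.11473 — 2 statements merged into one kernel-verified Lean document; each statement's English description precedes it below -/
import Mathlib

section
/- Fix α > 0 with α ≠ 1 and K ≥ 1. Suppose that for every choice of linearly independent g_1,...,g_K ∈ R^d and every c ∈ R^K_{>0}, whenever w solves (Gw)_i = w_i^{-1/α} componentwise with w_i > 0, the vector w̃ defined by w̃_i = w_i/c_i solves the analogous system for the rescaled Gram matrix G̃ = diag(c) G diag(c). Then c_i^{1-1/α} = 1 must hold for all c_i > 0, which is a contradiction; hence exact scale invariance of the α-fairness solution under arbitrary positive rescalings fails for every α ≠ 1. -/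
theorem stmt2 (α : ℝ) (hα : 0 < α) (hα1 : α ≠ 1) (K : ℕ) (hK : 1 ≤ K) :
    ¬ (∀ (d : ℕ) (g : Fin K → EuclideanSpace ℝ (Fin d)),
        LinearIndependent ℝ g →
        ∀ (c : Fin K → ℝ), (∀ i, 0 < c i) →
        ∀ (w : Fin K → ℝ), (∀ i, 0 < w i) →
        (∀ i, (Matrix.of fun i j => (inner ℝ (g i) (g j) : ℝ)).mulVec w i
            = w i ^ (-(1/α))) →
        (∀ i, (Matrix.of fun i j => (inner ℝ (c i • g i) (c j • g j) : ℝ)).mulVec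
            (fun i => w i / c i) i = (w i / c i) ^ (-(1/α)))) := by
  intro h
  set b := EuclideanSpace.basisFun (Fin K) ℝ with hb
  have hortho : Orthonormal ℝ (b : Fin K → EuclideanSpace ℝ (Fin K)) := b.orthonormal
  have hinner : ∀ i j : Fin K, (inner ℝ (b i) (b j) : ℝ) = if i = j then 1 else 0 :=
    orthonormal_iff_ite.mp hortho
  have hli : LinearIndependent ℝ (b : Fin K → EuclideanSpace ℝ (Fin K)) :=
    hortho.linearIndependent
  have key := h K b hli (fun _ => 2) (fun _ => by norm_num) (fun _ => 1)
    (fun _ => one_pos)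
    (by
      intro i
      simp only [Matrix.mulVec, Matrix.of_apply, dotProduct, hinner]
      rw [Real.one_rpow]
      simp)
    ⟨0, hK⟩
  simp only [Matrix.mulVec, Matrix.of_apply, dotProduct, inner_smul_left,
    inner_smul_right, hinner] at key
  -- key : ∑ j, 2 * (2 * (if _ = j then 1 else 0)) * (1/2) = (1/2) ^ (-(1/α))
  rw [Finset.sum_eq_single (⟨0, hK⟩ : Fin K)] at key
  · simp only [if_pos rfl] at key
    norm_num at key
    -- key : 2 = (1/2 : ℝ) ^ (-(1/α)) or similar
    have h2 : ((1:ℝ)/2) ^ (-α⁻¹) = (2:ℝ) ^ (α⁻¹ : ℝ) := by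
      rw [one_div, Real.inv_rpow (by norm_num), Real.rpow_neg (by norm_num), inv_inv]
    rw [h2] at key
    have : (2:ℝ) ^ (1:ℝ) = (2:ℝ) ^ (α⁻¹ : ℝ) := by rw [Real.rpow_one]; exact key
    have h3 : (1:ℝ) = α⁻¹ := by
      by_contra hne
      rcases lt_or_gt_of_ne hne with hlt | hlt
      · exact absurd this (ne_of_lt ((Real.rpow_lt_rpow_left_iff (by norm_num)).mpr hlt))
      · exact absurd this.symm (ne_of_lt ((Real.rpow_lt_rpow_left_iff (by norm_num)).mpr hlt))
    have : α = 1 := by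
      field_simp at h3
      linarith
    exact hα1 this
  · intro j _ hj
    simp [if_neg (Ne.symm hj)]
  · intro hmem
    exact absurd (Finset.mem_univ _) hmem
end

section
/- Composition of PopArt and α=1 FairGrad: let g_1,...,g_K ∈ R^d be linearly independent and let σ_1,...,σ_K > 0. Let d_raw = sum_i w_i g_i where w is the positive solution of the Gram-matrix KKT system for (g_1,...,g_K), and let d_pop = sum_i w̃_i (σ_i^{-2} g_i) where w̃ is the positive solution of the KKT system for (σ_1^{-2} g_1,...,σ_K^{-2} g_K). Then d_pop = d_raw. -/
/-- Uniqueness of the positive solution of the Gram KKT system. -/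
lemma kkt_unique {d K : ℕ} (g : Fin K → EuclideanSpace ℝ (Fin d))
    (hg : LinearIndependent ℝ g)
    (w v : Fin K → ℝ) (hw : ∀ i, 0 < w i) (hv : ∀ i, 0 < v i)
    (hW : ∀ i, ∑ j, (inner ℝ (g i) (g j) : ℝ) * w j = (w i)⁻¹)
    (hV : ∀ i, ∑ j, (inner ℝ (g i) (g j) : ℝ) * v j = (v i)⁻¹) :
    w = v := by
  set x : EuclideanSpace ℝ (Fin d) := ∑ i, (w i - v i) • g i with hx
  have hxx : (inner ℝ x x : ℝ) = ∑ i, (w i - v i) * ((w i)⁻¹ - (v i)⁻¹) := by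
    rw [hx, inner_sum]
    refine Finset.sum_congr rfl fun i _ => ?_
    rw [real_inner_smul_right, sum_inner]
    congr 1
    have : ∑ j, (inner ℝ ((w j - v j) • g j) (g i) : ℝ)
        = ∑ j, (inner ℝ (g i) (g j) : ℝ) * (w j - v j) := by
      refine Finset.sum_congr rfl fun j _ => ?_
      rw [real_inner_smul_left, real_inner_comm]; ring
    rw [this]
    simp only [mul_sub]
    rw [Finset.sum_sub_distrib, hW i, hV i]
  have hle : (inner ℝ x x : ℝ) ≤ 0 := by
    rw [hxx]
    refine Finset.sum_nonpos fun i _ => ?_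
    have h1 := hw i; have h2 := hv i
    have : (w i - v i) * ((w i)⁻¹ - (v i)⁻¹) = -((w i - v i)^2 / (w i * v i)) := by
      field_simp; ring
    rw [this]
    apply neg_nonpos.mpr
    positivity
  have hx0 : x = 0 := by
    have := real_inner_self_nonneg (x := x)
    have hxx0 : (inner ℝ x x : ℝ) = 0 := le_antisymm hle this
    exact inner_self_eq_zero.mp hxx0
  have hcoeff : ∀ i, w i - v i = 0 :=
    Fintype.linearIndependent_iff.mp hg (fun i => w i - v i) (hx ▸ hx0)
  funext i
  have := hcoeff i
  linarith

theorem stmt14 {d K : ℕ} (g : Fin K → EuclideanSpace ℝ (Fin d))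
    (hg : LinearIndependent ℝ g)
    (σ : Fin K → ℝ) (hσ : ∀ i, 0 < σ i)
    (w : Fin K → ℝ) (hw : ∀ i, 0 < w i)
    (hKKT : ∀ i, (Matrix.of fun i j => (inner ℝ (g i) (g j) : ℝ)).mulVec w i = (w i)⁻¹)
    (wt : Fin K → ℝ) (hwt : ∀ i, 0 < wt i)
    (hKKTt : ∀ i, (Matrix.of fun i j =>
        (inner ℝ ((σ i ^ 2)⁻¹ • g i) ((σ j ^ 2)⁻¹ • g j) : ℝ)).mulVec wt i = (wt i)⁻¹) :
    ∑ i, wt i • (σ i ^ 2)⁻¹ • g i = ∑ i, w i • g i := by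
  have hc : ∀ i, (0:ℝ) < (σ i ^ 2)⁻¹ := fun i => by have := hσ i; positivity
  set v : Fin K → ℝ := fun i => (σ i ^ 2)⁻¹ * wt i with hvdef
  have hvpos : ∀ i, 0 < v i := fun i => mul_pos (hc i) (hwt i)
  have hW : ∀ i, ∑ j, (inner ℝ (g i) (g j) : ℝ) * w j = (w i)⁻¹ := by
    intro i
    have := hKKT i
    simpa [Matrix.mulVec, dotProduct] using this
  have hV : ∀ i, ∑ j, (inner ℝ (g i) (g j) : ℝ) * v j = (v i)⁻¹ := by
    intro i
    have h := hKKTt i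
    simp only [Matrix.mulVec, dotProduct, Matrix.of_apply,
      real_inner_smul_left, real_inner_smul_right] at h
    have hne : (σ i ^ 2)⁻¹ ≠ 0 := ne_of_gt (hc i)
    have : ∑ j, (inner ℝ (g i) (g j) : ℝ) * v j
        = ((σ i ^ 2)⁻¹)⁻¹ * ((σ i ^ 2)⁻¹ * ∑ j, (inner ℝ (g i) (g j) : ℝ) * v j) := by
      rw [← mul_assoc, inv_mul_cancel₀ hne, one_mul]
    rw [this]
    have : (σ i ^ 2)⁻¹ * ∑ j, (inner ℝ (g i) (g j) : ℝ) * v j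
        = ∑ j, (σ j ^ 2)⁻¹ * ((σ i ^ 2)⁻¹ * (inner ℝ (g i) (g j) : ℝ)) * wt j := by
      rw [Finset.mul_sum]
      refine Finset.sum_congr rfl fun j _ => ?_
      simp [hvdef]; ring
    rw [this, h, hvdef, mul_inv]
  have hwv : w = v := kkt_unique g hg w v hw hvpos hW hV
  refine Finset.sum_congr rfl fun i _ => ?_
  rw [smul_smul, mul_comm]
  exact congrArg (· • g i) (congrFun hwv i).symm
end
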